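/- arXiv:0801.4959 — 2 statements merged into one kernel-verified Lean document; each statement's English description precedes it below -/
import Mathlib

section
/- If f is in the form domain W^{1,2} (i.e. f ∈ L²((0,1), w dx) with ∫₀¹ p|f'|² dx < ∞, f absolutely continuous on compact subintervals of (0,1)), then f extends continuously to [0,1) and f(0) = 0. -/
open MeasureTheory Set

noncomputable def pp (ε x : ℝ) : ℝ := (1 - x) ^ ((1:ℝ) + 1/ε) * (1 + x) ^ ((1:ℝ) - 1/ε)

noncomputable def ww (ε x : ℝ) : ℝ := x⁻¹ * (1 - x) ^ ((1:ℝ)/ε) * (1 + x) ^ (-(1:ℝ)/ε)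

lemma pp_lower_aux (ε : ℝ) {b : ℝ} (hb0 : 0 < b) (hb : b < 1) :
    ∃ c > 0, ∀ x ∈ Icc (0:ℝ) b, c ≤ pp ε x := by
  have hcont : ContinuousOn (pp ε) (Icc (0:ℝ) b) := by
    apply ContinuousOn.mul
    · exact (continuousOn_const.sub continuousOn_id).rpow_const
        (fun x hx => Or.inl (by simp only [mem_Icc] at hx; intro h; simp only [Pi.sub_apply, Pi.add_apply, id] at h; nlinarith))
    · exact (continuousOn_const.add continuousOn_id).rpow_const
        (fun x hx => Or.inl (by simp only [mem_Icc] at hx; intro h; simp only [Pi.sub_apply, Pi.add_apply, id] at h; nlinarith))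
  obtain ⟨x₀, hx₀, hmin⟩ := (isCompact_Icc).exists_isMinOn ⟨0, by constructor <;> linarith⟩ hcont
  refine ⟨pp ε x₀, ?_, hmin⟩
  have h1 : (0:ℝ) < 1 - x₀ := by simp only [mem_Icc] at hx₀; linarith
  have h2 : (0:ℝ) < 1 + x₀ := by simp only [mem_Icc] at hx₀; linarith
  exact mul_pos (Real.rpow_pos_of_pos h1 _) (Real.rpow_pos_of_pos h2 _)

lemma f'_meas_aux (f' : ℝ → ℂ) (b : ℝ) (hb0 : 0 < b) (hb1 : b < 1)
    (hAC : ∀ a ∈ Ioo (0:ℝ) 1, ∀ b ∈ Ioo (0:ℝ) 1, IntervalIntegrable f' volume a b) :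
    AEStronglyMeasurable f' (volume.restrict (Ioo (0:ℝ) b)) := by
  have hU : Ioo (0:ℝ) b ⊆ ⋃ n : ℕ, Ioc (b / (n + 2)) b := by
    intro x hx
    obtain ⟨n, hn⟩ := exists_nat_gt (b / x)
    refine mem_iUnion.2 ⟨n, ?_, hx.2.le⟩
    rw [div_lt_iff₀ (by positivity)]
    have : b / x < n + 2 := by linarith
    rw [div_lt_iff₀ hx.1] at this
    linarith
  have key : ∀ n : ℕ, AEStronglyMeasurable f' (volume.restrict (Ioc (b / (n + 2)) b)) := by
    intro n
    have h1 : b / ((n:ℝ) + 2) ∈ Ioo (0:ℝ) 1 := by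
      constructor
      · positivity
      · calc b / ((n:ℝ) + 2) ≤ b / 2 := by
              apply div_le_div_of_nonneg_left hb0.le (by norm_num) (by norm_num)
          _ < 1 := by linarith
    have := (hAC _ h1 b ⟨hb0, hb1⟩)
    rw [intervalIntegrable_iff_integrableOn_Ioc_of_le] at this
    · exact this.aestronglyMeasurable
    · rw [div_le_iff₀ (by positivity)]; nlinarith
  exact (AEStronglyMeasurable.iUnion key).mono_measure (Measure.restrict_mono hU le_rfl)

/-- Any f in the form domain W^{1,2} (f ∈ L²((0,1), w dx), locally absolutely continuous on
(0,1) with derivative f', and ∫₀¹ p|f'|² < ∞) extends continuously to [0,1) with value 0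
at 0. -/
theorem form_domain_continuous_vanishes_at_zero (ε : ℝ) (hε : ε ∈ Ioo (0:ℝ) 2)
    (f f' : ℝ → ℂ)
    (hAC : ∀ a ∈ Ioo (0:ℝ) 1, ∀ b ∈ Ioo (0:ℝ) 1,
      IntervalIntegrable f' volume a b ∧ f b - f a = ∫ x in a..b, f' x)
    (hL2 : IntegrableOn (fun x => ‖f x‖ ^ 2 * ww ε x) (Ioo (0:ℝ) 1) volume)
    (hQ : IntegrableOn (fun x => pp ε x * ‖f' x‖ ^ 2) (Ioo (0:ℝ) 1) volume) :
    ∃ g : ℝ → ℂ, ContinuousOn g (Ico (0:ℝ) 1) ∧ g 0 = 0 ∧ EqOn g f (Ioo (0:ℝ) 1) := by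
  obtain ⟨hε0, hε2⟩ := hε
  -- Step 1: f' is integrable on (0,b) for every b < 1
  have hf'int : ∀ b ∈ Ioo (0:ℝ) 1, IntegrableOn f' (Ioo 0 b) volume := by
    intro b hb
    obtain ⟨c, hc, hcb⟩ := pp_lower_aux ε hb.1 hb.2
    have hmeas := f'_meas_aux f' b hb.1 hb.2 (fun a ha b' hb' => (hAC a ha b' hb').1)
    have hQg : IntegrableOn (fun x => c⁻¹ * (pp ε x * ‖f' x‖ ^ 2) + 1) (Ioo (0:ℝ) b) volume := by
      apply Integrable.add
      · exact ((hQ.mono_set (Ioo_subset_Ioo le_rfl hb.2.le)).const_mul _)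
      · exact integrableOn_const (by simp [Real.volume_Ioo])
    refine Integrable.mono' hQg hmeas ?_
    filter_upwards [ae_restrict_mem measurableSet_Ioo] with x hx
    have hpp : c ≤ pp ε x := hcb x ⟨hx.1.le, hx.2.le⟩
    have hppn : (0:ℝ) ≤ ‖f' x‖ ^ 2 := by positivity
    have h1 : ‖f' x‖ ^ 2 ≤ c⁻¹ * (pp ε x * ‖f' x‖ ^ 2) := by
      rw [← mul_assoc]
      nlinarith [mul_le_mul_of_nonneg_right hpp hppn, (inv_pos.2 hc).le,
        mul_le_mul_of_nonneg_left (mul_le_mul_of_nonneg_right hpp hppn) (inv_pos.2 hc).le,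
        inv_mul_cancel₀ hc.ne']
    nlinarith [norm_nonneg (f' x), sq_nonneg (‖f' x‖ - 1)]
  -- the candidate extension
  set g : ℝ → ℂ := fun x => f (1/2) + ∫ t in (1/2:ℝ)..x, f' t with hgdef
  have h12 : (1/2:ℝ) ∈ Ioo (0:ℝ) 1 := by norm_num
  have hEq : EqOn g f (Ioo (0:ℝ) 1) := by
    intro x hx
    have h := (hAC (1/2) h12 x hx).2
    simp only [hgdef]
    rw [← h]; ring
  -- Step 2: continuity on [0,1)
  have hcont : ContinuousOn g (Ico (0:ℝ) 1) := by
    intro x₀ hx₀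
    set b : ℝ := (max x₀ (1/2) + 1) / 2 with hbdef
    have hmx : (1/2:ℝ) ≤ max x₀ (1/2) := le_max_right _ _
    have hmx1 : max x₀ (1/2) < 1 := max_lt hx₀.2 (by norm_num)
    have hb0 : 0 < b := by rw [hbdef]; linarith
    have hb1 : b < 1 := by rw [hbdef]; linarith
    have hx₀b : x₀ < b := by
      have : x₀ ≤ max x₀ (1/2) := le_max_left _ _
      rw [hbdef]; linarith
    have hhb : (1/2:ℝ) < b := by rw [hbdef]; linarith
    have hint : IntervalIntegrable f' volume 0 b := by
      rw [intervalIntegrable_iff_integrableOn_Ioo_of_le hb0.le]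
      exact hf'int b ⟨hb0, hb1⟩
    have hcp : ContinuousOn (fun x => ∫ t in (1/2:ℝ)..x, f' t) (Icc (0:ℝ) b) := by
      have := intervalIntegral.continuousOn_primitive_interval' hint
        (a := 1/2) (by rw [uIcc_of_le hb0.le]; exact ⟨by norm_num, hhb.le⟩)
      rwa [uIcc_of_le hb0.le] at this
    have hcg : ContinuousWithinAt g (Icc (0:ℝ) b) x₀ :=
      (continuousOn_const.add hcp) x₀ ⟨hx₀.1, hx₀b.le⟩
    apply hcg.mono_of_mem_nhdsWithin
    have hIio : Iio b ∈ nhdsWithin x₀ (Ico (0:ℝ) 1) :=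
      mem_nhdsWithin_of_mem_nhds (Iio_mem_nhds hx₀b)
    refine Filter.mem_of_superset (Filter.inter_mem self_mem_nhdsWithin hIio) ?_
    rintro y ⟨hy1, hy2⟩
    exact ⟨hy1.1, le_of_lt hy2⟩
  -- Step 3: g 0 = 0
  have hg0 : g 0 = 0 := by
    by_contra hL
    have h1 : Filter.Tendsto g (nhdsWithin 0 (Ico (0:ℝ) 1)) (nhds (g 0)) :=
      hcont 0 ⟨le_rfl, by norm_num⟩
    have htend : Filter.Tendsto f (nhdsWithin 0 (Ioo (0:ℝ) 1)) (nhds (g 0)) := by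
      have h2 := h1.mono_left (nhdsWithin_mono _ Ioo_subset_Ico_self)
      exact h2.congr' (by filter_upwards [self_mem_nhdsWithin] with x hx using (hEq hx))
    have hev : ∀ᶠ x in nhdsWithin 0 (Ioo (0:ℝ) 1), ‖g 0‖/2 < ‖f x‖ :=
      htend.norm.eventually (eventually_gt_nhds (half_lt_self (norm_pos_iff.2 hL)))
    rw [eventually_nhdsWithin_iff, Metric.eventually_nhds_iff] at hev
    obtain ⟨δ, hδ0, hδ⟩ := hev
    set δ' : ℝ := min δ (1/2) with hδ'def
    have hδ'0 : 0 < δ' := lt_min hδ0 (by norm_num)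
    have hδ'h : δ' ≤ 1/2 := min_le_right _ _
    have hbig : ∀ x ∈ Ioo (0:ℝ) δ', ‖g 0‖/2 < ‖f x‖ := by
      intro x hx
      have hx1 : x ∈ Ioo (0:ℝ) 1 := ⟨hx.1, by have := hx.2; linarith [min_le_right δ (1/2:ℝ)]⟩
      refine hδ ?_ hx1
      rw [Real.dist_eq, sub_zero, abs_of_pos hx.1]
      exact lt_of_lt_of_le hx.2 (min_le_left _ _)
    set C : ℝ := (‖g 0‖/2)^2 * ((1/2:ℝ) ^ ((1:ℝ)/ε) * (2:ℝ) ^ (-(1:ℝ)/ε)) with hCdef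
    have hCpos : 0 < C := by
      have := norm_pos_iff.2 hL
      have h2 : (0:ℝ) < (1/2:ℝ) ^ ((1:ℝ)/ε) := Real.rpow_pos_of_pos (by norm_num) _
      have h3 : (0:ℝ) < (2:ℝ) ^ (-(1:ℝ)/ε) := Real.rpow_pos_of_pos (by norm_num) _
      positivity
    -- domination : C * x⁻¹ ≤ ‖f x‖^2 * ww ε x on (0, δ')
    have hdom : ∀ x ∈ Ioo (0:ℝ) δ', C * x⁻¹ ≤ ‖f x‖ ^ 2 * ww ε x := by
      intro x hx
      obtain ⟨hx0, hxδ⟩ := hx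
      have hx12 : x < 1/2 := lt_of_lt_of_le hxδ hδ'h
      have h1 : (‖g 0‖/2)^2 ≤ ‖f x‖^2 := by
        have := (hbig x ⟨hx0, hxδ⟩).le
        nlinarith [norm_nonneg (g 0)]
      have h2 : (1/2:ℝ) ^ ((1:ℝ)/ε) ≤ (1-x) ^ ((1:ℝ)/ε) :=
        Real.rpow_le_rpow (by norm_num) (by linarith) (by positivity)
      have h3 : (2:ℝ) ^ (-(1:ℝ)/ε) ≤ (1+x) ^ (-(1:ℝ)/ε) := by
        apply Real.rpow_le_rpow_of_nonpos (by linarith) (by linarith)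
        rw [neg_div]
        exact neg_nonpos.2 (by positivity)
      have hA : (0:ℝ) ≤ (1/2:ℝ) ^ ((1:ℝ)/ε) := (Real.rpow_pos_of_pos (by norm_num) _).le
      have hB : (0:ℝ) ≤ (2:ℝ) ^ (-(1:ℝ)/ε) := (Real.rpow_pos_of_pos (by norm_num) _).le
      have hkey := mul_le_mul (mul_le_mul h1 h2 hA (by positivity)) h3 hB
        (mul_nonneg (by positivity) (Real.rpow_nonneg (by linarith) _))
      have h4 := mul_le_mul_of_nonneg_right hkey (inv_nonneg.2 hx0.le)
      simp only [ww]
      rw [hCdef]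
      nlinarith [h4]
    -- hence x ↦ C * x⁻¹ is integrable on (0, δ'), contradiction
    have hIδ : IntegrableOn (fun x => ‖f x‖ ^ 2 * ww ε x) (Ioo (0:ℝ) δ') volume :=
      hL2.mono_set (Ioo_subset_Ioo le_rfl (by linarith))
    have hCint : IntegrableOn (fun x : ℝ => C * x⁻¹) (Ioo (0:ℝ) δ') volume := by
      refine Integrable.mono' hIδ
        ((measurable_const.mul measurable_inv).aestronglyMeasurable) ?_
      filter_upwards [ae_restrict_mem measurableSet_Ioo] with x hx
      rw [Real.norm_eq_abs, abs_of_nonneg (mul_nonneg hCpos.le (inv_nonneg.2 hx.1.le))]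
      exact hdom x hx
    have hinv : IntegrableOn (fun x : ℝ => x ^ (-1:ℝ)) (Ioo (0:ℝ) δ') volume := by
      have h5 := hCint.const_mul C⁻¹
      simp only [← mul_assoc, inv_mul_cancel₀ hCpos.ne', one_mul] at h5
      exact IntegrableOn.congr_fun h5 (fun x _ => (Real.rpow_neg_one x).symm) measurableSet_Ioo
    rw [intervalIntegral.integrableOn_Ioo_rpow_iff hδ'0] at hinv
    norm_num at hinv
  exact ⟨g, hcont, hg0, hEq⟩
end

section
/- Asymptotically, c(s) ∼ 2^{-1/2} s^{1/2}, c'(s) ∼ 2^{-3/2} s^{-1/2}, and c''(s) ∼ −2^{-5/2} s^{-3/2} as s → 0+. -/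
open MeasureTheory Set Filter
open Real

noncomputable def betaIntegrand (y : ℝ) : ℝ :=
  y ^ (-(1:ℝ)/2) * (1 - y) ^ (-(1:ℝ)/2) * (1 + y) ^ (-(1:ℝ)/2)

noncomputable def psi (t : ℝ) : ℝ := ∫ y in Ioo (0:ℝ) t, betaIntegrand y

noncomputable def cfun (ε : ℝ) (φ : ℝ → ℝ) (s : ℝ) : ℝ :=
  (ww ε (φ s) * pp ε (φ s)) ^ (-(1:ℝ)/4)






lemma beta_meas : Measurable betaIntegrand := by
  unfold betaIntegrand
  fun_prop

lemma beta_pos {y : ℝ} (h0 : 0 < y) (h1 : y < 1) : 0 < betaIntegrand y := by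
  unfold betaIntegrand
  have := rpow_pos_of_pos h0 (-(1:ℝ)/2)
  have := rpow_pos_of_pos (by linarith : (0:ℝ) < 1 - y) (-(1:ℝ)/2)
  have := rpow_pos_of_pos (by linarith : (0:ℝ) < 1 + y) (-(1:ℝ)/2)
  positivity

lemma rpow_half_int {u : ℝ} (hu : 0 ≤ u) :
    IntegrableOn (fun y : ℝ => y ^ (-(1:ℝ)/2)) (Ioo 0 u) := by
  have h := (intervalIntegral.intervalIntegrable_rpow' (a := 0) (b := u) (r := -(1:ℝ)/2) (by norm_num))
  have := (intervalIntegrable_iff_integrableOn_Ioc_of_le hu).1 h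
  exact this.mono_set Set.Ioo_subset_Ioc_self

lemma beta_le {u y : ℝ} (hu1 : u < 1) (hy : y ∈ Set.Ioo 0 u) :
    betaIntegrand y ≤ (1 - u) ^ (-(1:ℝ)/2) * y ^ (-(1:ℝ)/2) := by
  obtain ⟨h0, h1⟩ := hy
  have hy1 : y < 1 := h1.trans hu1
  have e1 : (1 - y) ^ (-(1:ℝ)/2) ≤ (1 - u) ^ (-(1:ℝ)/2) :=
    rpow_le_rpow_of_nonpos (by linarith) (by linarith) (by norm_num)
  have e2 : (1 + y) ^ (-(1:ℝ)/2) ≤ 1 :=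
    rpow_le_one_of_one_le_of_nonpos (by linarith) (by norm_num)
  have hyp := rpow_pos_of_pos h0 (-(1:ℝ)/2)
  have h1y := rpow_pos_of_pos (by linarith : (0:ℝ) < 1 - y) (-(1:ℝ)/2)
  calc betaIntegrand y ≤ y ^ (-(1:ℝ)/2) * (1-y) ^ (-(1:ℝ)/2) * 1 := by
        unfold betaIntegrand
        exact mul_le_mul_of_nonneg_left e2 (by positivity)
    _ ≤ y ^ (-(1:ℝ)/2) * (1-u) ^ (-(1:ℝ)/2) * 1 := by
        have := mul_le_mul_of_nonneg_left e1 hyp.le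
        nlinarith
    _ = (1 - u) ^ (-(1:ℝ)/2) * y ^ (-(1:ℝ)/2) := by ring

lemma beta_ge {u y : ℝ} (hu1 : u ≤ 1) (hy : y ∈ Set.Ioo 0 u) :
    (1 + u) ^ (-(1:ℝ)/2) * y ^ (-(1:ℝ)/2) ≤ betaIntegrand y := by
  obtain ⟨h0, h1⟩ := hy
  have hy1 : y < 1 := lt_of_lt_of_le h1 hu1
  have e1 : (1:ℝ) ≤ (1 - y) ^ (-(1:ℝ)/2) :=
    one_le_rpow_of_pos_of_le_one_of_nonpos (by linarith) (by linarith) (by norm_num)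
  have e2 : (1 + u) ^ (-(1:ℝ)/2) ≤ (1 + y) ^ (-(1:ℝ)/2) :=
    rpow_le_rpow_of_nonpos (by linarith) (by linarith) (by norm_num)
  have hyp := rpow_pos_of_pos h0 (-(1:ℝ)/2)
  have h2 := rpow_pos_of_pos (by linarith : (0:ℝ) < 1 + y) (-(1:ℝ)/2)
  have h3 := rpow_pos_of_pos (by linarith : (0:ℝ) < 1 + u) (-(1:ℝ)/2)
  calc (1 + u) ^ (-(1:ℝ)/2) * y ^ (-(1:ℝ)/2)
      ≤ (1 + y) ^ (-(1:ℝ)/2) * y ^ (-(1:ℝ)/2) := by nlinarith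
    _ ≤ (1 + y) ^ (-(1:ℝ)/2) * (y ^ (-(1:ℝ)/2) * (1 - y) ^ (-(1:ℝ)/2)) := by
        nlinarith [mul_le_mul_of_nonneg_left e1 hyp.le]
    _ = betaIntegrand y := by unfold betaIntegrand; ring

lemma beta_int {u : ℝ} (hu0 : 0 ≤ u) (hu1 : u < 1) :
    IntegrableOn betaIntegrand (Ioo 0 u) := by
  have hg : IntegrableOn (fun y : ℝ => (1-u) ^ (-(1:ℝ)/2) * y ^ (-(1:ℝ)/2)) (Ioo 0 u) :=
    (rpow_half_int hu0).const_mul _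
  refine Integrable.mono hg (beta_meas.aestronglyMeasurable.restrict) ?_
  filter_upwards [ae_restrict_mem measurableSet_Ioo] with y hy
  rw [Real.norm_eq_abs, Real.norm_eq_abs,
    abs_of_nonneg (beta_pos hy.1 (hy.2.trans hu1)).le,
    abs_of_nonneg (by
      have h1 := rpow_pos_of_pos (by linarith [hy.2] : (0:ℝ) < 1 - u) (-(1:ℝ)/2)
      have h2 := rpow_pos_of_pos hy.1 (-(1:ℝ)/2)
      positivity)]
  exact beta_le hu1 hy

lemma integral_rpow_half {u : ℝ} (hu : 0 ≤ u) :
    ∫ y in Ioo (0:ℝ) u, y ^ (-(1:ℝ)/2) = 2 * u ^ ((1:ℝ)/2) := by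
  rw [setIntegral_congr_set Ioo_ae_eq_Ioc, ← intervalIntegral.integral_of_le hu,
    integral_rpow (Or.inl (by norm_num))]
  rw [Real.zero_rpow (by norm_num)]
  norm_num
  ring

lemma psi_zero : psi 0 = 0 := by simp [psi]

lemma psi_upper {t : ℝ} (ht : t ∈ Ioo (0:ℝ) 1) :
    psi t ≤ (1 - t) ^ (-(1:ℝ)/2) * (2 * t ^ ((1:ℝ)/2)) := by
  obtain ⟨h0, h1⟩ := ht
  have : psi t ≤ ∫ y in Ioo (0:ℝ) t, (1-t) ^ (-(1:ℝ)/2) * y ^ (-(1:ℝ)/2) := by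
    refine setIntegral_mono_on (beta_int h0.le h1) ((rpow_half_int h0.le).const_mul _)
      measurableSet_Ioo ?_
    exact fun y hy => beta_le h1 hy
  rwa [MeasureTheory.integral_const_mul, integral_rpow_half h0.le] at this

lemma psi_lower {t : ℝ} (ht : t ∈ Ioo (0:ℝ) 1) :
    (1 + t) ^ (-(1:ℝ)/2) * (2 * t ^ ((1:ℝ)/2)) ≤ psi t := by
  obtain ⟨h0, h1⟩ := ht
  have : (∫ y in Ioo (0:ℝ) t, (1+t) ^ (-(1:ℝ)/2) * y ^ (-(1:ℝ)/2)) ≤ psi t := by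
    refine setIntegral_mono_on ((rpow_half_int h0.le).const_mul _) (beta_int h0.le h1)
      measurableSet_Ioo ?_
    exact fun y hy => beta_ge h1.le hy
  rwa [MeasureTheory.integral_const_mul, integral_rpow_half h0.le] at this

lemma psi_pos {t : ℝ} (ht : t ∈ Ioo (0:ℝ) 1) : 0 < psi t := by
  refine lt_of_lt_of_le ?_ (psi_lower ht)
  obtain ⟨h0, h1⟩ := ht
  have := rpow_pos_of_pos (by linarith : (0:ℝ) < 1 + t) (-(1:ℝ)/2)
  have := rpow_pos_of_pos h0 ((1:ℝ)/2)
  positivity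

lemma psi_mono {v u : ℝ} (h0 : 0 ≤ v) (hvu : v ≤ u) (hu : u < 1) : psi v ≤ psi u := by
  rcases eq_or_lt_of_le (h0.trans hvu) with h | h
  · have hv : v = 0 := le_antisymm (hvu.trans h.symm.le) h0
    rw [hv, ← h]
  · refine setIntegral_mono_set (beta_int (h0.trans hvu) hu) ?_
      (HasSubset.Subset.eventuallyLE (Ioo_subset_Ioo_right hvu))
    filter_upwards [ae_restrict_mem measurableSet_Ioo] with y hy
    exact (beta_pos hy.1 (hy.2.trans hu)).le

lemma psi_strict {v u : ℝ} (h0 : 0 ≤ v) (hvu : v < u) (hu : u < 1) : psi v < psi u := by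
  rcases eq_or_lt_of_le h0 with h | hv
  · rw [← h, psi_zero]
    exact psi_pos ⟨by linarith, hu⟩
  · have hu0 : (0:ℝ) < u := hv.trans hvu
    have hsplit : Ioo (0:ℝ) 0 ∪ Ioo 0 u = Ioo 0 u := by simp
    have hunion : Ioo (0:ℝ) v ∪ Ico v u = Ioo 0 u := Ioo_union_Ico_eq_Ioo hv hvu.le
    have hIco_sub : Ico v u ⊆ Ioo 0 u := fun y hy => ⟨lt_of_lt_of_le hv hy.1, hy.2⟩
    have hdisj : Disjoint (Ioo (0:ℝ) v) (Ico v u) :=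
      Set.disjoint_left.2 fun y hy hy' => absurd hy.2 (not_lt.2 hy'.1)
    have hint1 : IntegrableOn betaIntegrand (Ioo 0 v) := beta_int h0 (hvu.trans hu)
    have hint2 : IntegrableOn betaIntegrand (Ico v u) :=
      (beta_int hu0.le hu).mono_set hIco_sub
    have heq : psi u = psi v + ∫ y in Ico v u, betaIntegrand y := by
      unfold psi
      rw [← hunion, setIntegral_union hdisj measurableSet_Ico hint1 hint2]
    set c : ℝ := (1 + u) ^ (-(1:ℝ)/2) * u ^ (-(1:ℝ)/2) with hc
    have hcpos : 0 < c := by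
      have := rpow_pos_of_pos (by linarith : (0:ℝ) < 1 + u) (-(1:ℝ)/2)
      have := rpow_pos_of_pos hu0 (-(1:ℝ)/2)
      positivity
    have hbd : ∀ y ∈ Ico v u, c ≤ betaIntegrand y := by
      intro y hy
      have hy' : y ∈ Ioo 0 u := hIco_sub hy
      refine le_trans ?_ (beta_ge hu.le hy')
      have : u ^ (-(1:ℝ)/2) ≤ y ^ (-(1:ℝ)/2) :=
        rpow_le_rpow_of_nonpos hy'.1 hy'.2.le (by norm_num)
      have h1u := rpow_pos_of_pos (by linarith : (0:ℝ) < 1 + u) (-(1:ℝ)/2)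
      exact mul_le_mul_of_nonneg_left this h1u.le
    have hge := setIntegral_ge_of_const_le measurableSet_Ico
      (by rw [Real.volume_Ico]; exact ENNReal.ofReal_ne_top) hbd hint2
    rw [Real.volume_real_Ico_of_le hvu.le, smul_eq_mul] at hge
    have : 0 < c * (u - v) := mul_pos hcpos (by linarith)
    linarith

lemma hasDerivAt_psi {t : ℝ} (ht : t ∈ Ioo (0:ℝ) 1) : HasDerivAt psi (betaIntegrand t) t := by
  obtain ⟨h0, h1⟩ := ht
  have hcont : ContinuousAt betaIntegrand t := by
    unfold betaIntegrand
    have c1 : ContinuousAt (fun y : ℝ => y ^ (-(1:ℝ)/2)) t :=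
      (continuousAt_id).rpow_const (Or.inl h0.ne')
    have c2 : ContinuousAt (fun y : ℝ => (1 - y) ^ (-(1:ℝ)/2)) t :=
      ((continuousAt_const.sub continuousAt_id)).rpow_const (Or.inl (by simp; intro h; linarith))
    have c3 : ContinuousAt (fun y : ℝ => (1 + y) ^ (-(1:ℝ)/2)) t :=
      ((continuousAt_const.add continuousAt_id)).rpow_const (Or.inl (by simp; intro h; linarith))
    exact (c1.mul c2).mul c3
  have hii : IntervalIntegrable betaIntegrand volume 0 t := by
    refine (intervalIntegrable_iff_integrableOn_Ioc_of_le h0.le).2 ?_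
    have : IntegrableOn betaIntegrand (Ioo 0 ((1+t)/2)) := beta_int (by linarith) (by linarith)
    exact this.mono_set (fun y hy => ⟨hy.1, by linarith [hy.2]⟩)
  have hF : HasDerivAt (fun u => ∫ x in (0:ℝ)..u, betaIntegrand x) (betaIntegrand t) t :=
    intervalIntegral.integral_hasDerivAt_right hii
      beta_meas.stronglyMeasurable.stronglyMeasurableAtFilter hcont
  refine hF.congr_of_eventuallyEq ?_
  filter_upwards [Ioo_mem_nhds h0 h1] with x hx
  unfold psi
  rw [setIntegral_congr_set Ioo_ae_eq_Ioc, ← intervalIntegral.integral_of_le hx.1.le]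

noncomputable def mono (p q r t : ℝ) : ℝ := t ^ p * (1 - t) ^ q * (1 + t) ^ r

lemma mono_pos {t : ℝ} (ht : t ∈ Ioo (0:ℝ) 1) (p q r : ℝ) : 0 < mono p q r t := by
  obtain ⟨h0, h1⟩ := ht
  exact mul_pos (mul_pos (rpow_pos_of_pos h0 _) (rpow_pos_of_pos (by linarith) _))
    (rpow_pos_of_pos (by linarith) _)

lemma mono_mul {t : ℝ} (ht : t ∈ Ioo (0:ℝ) 1) (p q r p' q' r' : ℝ) :
    mono p q r t * mono p' q' r' t = mono (p+p') (q+q') (r+r') t := by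
  obtain ⟨h0, h1⟩ := ht
  simp only [mono, rpow_add h0, rpow_add (by linarith : (0:ℝ) < 1 - t),
    rpow_add (by linarith : (0:ℝ) < 1 + t)]
  ring

lemma mono_inv {t : ℝ} (ht : t ∈ Ioo (0:ℝ) 1) (p q r : ℝ) :
    (mono p q r t)⁻¹ = mono (-p) (-q) (-r) t := by
  obtain ⟨h0, h1⟩ := ht
  simp only [mono, mul_inv, ← rpow_neg h0.le, ← rpow_neg (by linarith : (0:ℝ) ≤ 1 - t),
    ← rpow_neg (by linarith : (0:ℝ) ≤ 1 + t)]

lemma hasDerivAt_mono {t : ℝ} (ht : t ∈ Ioo (0:ℝ) 1) (p q r : ℝ) :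
    HasDerivAt (mono p q r)
      (p * mono (p-1) q r t - q * mono p (q-1) r t + r * mono p q (r-1) t) t := by
  obtain ⟨h0, h1⟩ := ht
  have H1 : HasDerivAt (fun t : ℝ => t ^ p) (p * t ^ (p-1)) t :=
    Real.hasDerivAt_rpow_const (Or.inl h0.ne')
  have H2 : HasDerivAt (fun t : ℝ => (1 - t) ^ q) (q * (1 - t) ^ (q-1) * (-1)) t := by
    have := HasDerivAt.rpow_const (p := q) ((hasDerivAt_id t).const_sub 1)
      (Or.inl (by simp only [id]; intro h; linarith))
    simpa using this.congr_deriv (by simp only [id]; ring)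
  have H3 : HasDerivAt (fun t : ℝ => (1 + t) ^ r) (r * (1 + t) ^ (r-1) * 1) t := by
    have := HasDerivAt.rpow_const (p := r) ((hasDerivAt_id t).const_add 1)
      (Or.inl (by simp only [id]; intro h; linarith))
    simpa using this.congr_deriv (by simp only [id]; ring)
  have := ((H1.mul H2).mul H3)
  convert this using 1
  · rfl
  · rfl
  · rfl
  simp only [mono]
  have e1 : t ^ p = t ^ (p-1) * t := by
    rw [← rpow_add_one h0.ne' (p-1)]; ring_nf
  have e2 : (1-t) ^ q = (1-t) ^ (q-1) * (1-t) := by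
    rw [← rpow_add_one (by linarith : (1:ℝ) - t ≠ 0) (q-1)]; ring_nf
  have e3 : (1+t) ^ r = (1+t) ^ (r-1) * (1+t) := by
    rw [← rpow_add_one (by linarith : (1:ℝ) + t ≠ 0) (r-1)]; ring_nf
  calc p * (t ^ (p-1) * (1-t) ^ q * (1+t) ^ r) - q * (t ^ p * (1-t) ^ (q-1) * (1+t) ^ r)
      + r * (t ^ p * (1-t) ^ q * (1+t) ^ (r-1))
      = (p * t ^ (p-1) * (1-t) ^ q + t ^ p * (q * (1-t)^(q-1) * (-1))) * (1+t) ^ r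
        + t ^ p * (1-t) ^ q * (r * (1+t) ^ (r-1) * 1) := by ring
    _ = _ := rfl

lemma betaIntegrand_eq' (y : ℝ) :
    (y ^ (-(1:ℝ)/2) * (1 - y) ^ (-(1:ℝ)/2) * (1 + y) ^ (-(1:ℝ)/2)) = mono (-(1/2)) (-(1/2)) (-(1/2)) y := by
  norm_num [mono]

lemma mono_rpow {t : ℝ} (ht : t ∈ Ioo (0:ℝ) 1) (p q r c : ℝ) :
    (mono p q r t) ^ c = mono (p*c) (q*c) (r*c) t := by
  obtain ⟨h0, h1⟩ := ht
  have w1 : (0:ℝ) ≤ t ^ p := (rpow_pos_of_pos h0 p).le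
  have w2 : (0:ℝ) ≤ (1-t) ^ q := (rpow_pos_of_pos (by linarith) q).le
  have w3 : (0:ℝ) ≤ (1+t) ^ r := (rpow_pos_of_pos (by linarith) r).le
  rw [mono, mul_rpow (by positivity) w3, mul_rpow w1 w2,
    ← rpow_mul h0.le, ← rpow_mul (by linarith : (0:ℝ) ≤ 1 - t),
    ← rpow_mul (by linarith : (0:ℝ) ≤ 1 + t)]
  rfl

noncomputable def dmonoB (p q r t : ℝ) : ℝ :=
  p * mono (p-1/2) (q+1/2) (r+1/2) t - q * mono (p+1/2) (q-1/2) (r+1/2) t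
    + r * mono (p+1/2) (q+1/2) (r-1/2) t

lemma dmonoB_eq {t : ℝ} (ht : t ∈ Ioo (0:ℝ) 1) (p q r : ℝ) :
    dmonoB p q r t =
      (p * mono (p-1) q r t - q * mono p (q-1) r t + r * mono p q (r-1) t)
        * mono (1/2) (1/2) (1/2) t := by
  rw [add_mul, sub_mul, mul_assoc, mul_assoc, mul_assoc, mono_mul ht, mono_mul ht, mono_mul ht]
  unfold dmonoB
  rw [show p - 1 + 1/2 = p - 1/2 by ring, show q - 1 + 1/2 = q - 1/2 by ring,
    show r - 1 + 1/2 = r - 1/2 by ring]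

lemma tendsto_smooth (q r : ℝ) :
    Tendsto (fun t : ℝ => (1-t) ^ q * (1+t) ^ r) (nhdsWithin 0 (Ioo (0:ℝ) 1)) (nhds 1) := by
  have c2 : ContinuousAt (fun y : ℝ => (1 - y) ^ q) 0 :=
    ((continuousAt_const.sub continuousAt_id)).rpow_const (Or.inl (by norm_num))
  have c3 : ContinuousAt (fun y : ℝ => (1 + y) ^ r) 0 :=
    ((continuousAt_const.add continuousAt_id)).rpow_const (Or.inl (by norm_num))
  have := (c2.mul c3).tendsto.mono_left (nhdsWithin_le_nhds (s := Ioo (0:ℝ) 1))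
  simpa [Pi.mul_def] using this

lemma tendsto_rpow_mono_zero (p q r e : ℝ) (h : e + p = 0) :
    Tendsto (fun t : ℝ => t ^ e * mono p q r t) (nhdsWithin 0 (Ioo (0:ℝ) 1)) (nhds 1) := by
  refine (tendsto_smooth q r).congr' ?_
  filter_upwards [self_mem_nhdsWithin] with t ht
  obtain ⟨h0, h1⟩ := ht
  unfold mono
  rw [← mul_assoc, ← mul_assoc, ← rpow_add h0, h, rpow_zero, one_mul]

lemma tendsto_rpow_mono_pos (p q r e : ℝ) (h : 0 < e + p) :
    Tendsto (fun t : ℝ => t ^ e * mono p q r t) (nhdsWithin 0 (Ioo (0:ℝ) 1)) (nhds 0) := by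
  have c1 : ContinuousAt (fun y : ℝ => y ^ (e+p)) 0 :=
    Real.continuousAt_rpow_const 0 (e+p) (Or.inr h.le)
  have t1 : Tendsto (fun t : ℝ => t ^ (e+p)) (nhdsWithin 0 (Ioo (0:ℝ) 1)) (nhds 0) := by
    have := c1.tendsto.mono_left (nhdsWithin_le_nhds (s := Ioo (0:ℝ) 1))
    rwa [Real.zero_rpow h.ne'] at this
  have := t1.mul (tendsto_smooth q r)
  rw [zero_mul] at this
  refine this.congr' ?_
  filter_upwards [self_mem_nhdsWithin] with t ht
  obtain ⟨h0, h1⟩ := ht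
  unfold mono
  rw [rpow_add h0]
  ring

lemma tendsto_rpow_dmonoB (p q r e : ℝ) (h : e + p = 1/2) :
    Tendsto (fun t : ℝ => t ^ e * dmonoB p q r t) (nhdsWithin 0 (Ioo (0:ℝ) 1)) (nhds p) := by
  have h1 := tendsto_rpow_mono_zero (p-1/2) (q+1/2) (r+1/2) e (by linarith)
  have h2 := tendsto_rpow_mono_pos (p+1/2) (q-1/2) (r+1/2) e (by linarith)
  have h3 := tendsto_rpow_mono_pos (p+1/2) (q+1/2) (r-1/2) e (by linarith)
  have H := ((h1.const_mul p).sub (h2.const_mul q)).add (h3.const_mul r)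
  rw [show p * 1 - q * 0 + r * 0 = p by ring] at H
  exact H.congr (fun t => by unfold dmonoB; ring)

lemma tendsto_rpow_dmonoB_pos (p q r e : ℝ) (h : 0 < e + p - 1/2) :
    Tendsto (fun t : ℝ => t ^ e * dmonoB p q r t) (nhdsWithin 0 (Ioo (0:ℝ) 1)) (nhds 0) := by
  have h1 := tendsto_rpow_mono_pos (p-1/2) (q+1/2) (r+1/2) e (by linarith)
  have h2 := tendsto_rpow_mono_pos (p+1/2) (q-1/2) (r+1/2) e (by linarith)
  have h3 := tendsto_rpow_mono_pos (p+1/2) (q+1/2) (r-1/2) e (by linarith)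
  have H := ((h1.const_mul p).sub (h2.const_mul q)).add (h3.const_mul r)
  rw [show p * 0 - q * 0 + r * 0 = 0 by ring] at H
  exact H.congr (fun t => by unfold dmonoB; ring)

lemma tendsto_psi_ratio :
    Tendsto (fun t : ℝ => psi t / (2 * t ^ ((1:ℝ)/2))) (nhdsWithin 0 (Ioo (0:ℝ) 1)) (nhds 1) := by
  have hlo : Tendsto (fun t : ℝ => (1+t) ^ (-(1:ℝ)/2)) (nhdsWithin 0 (Ioo (0:ℝ) 1)) (nhds 1) := by
    have c3 : ContinuousAt (fun y : ℝ => (1 + y) ^ (-(1:ℝ)/2)) 0 :=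
      ((continuousAt_const.add continuousAt_id)).rpow_const (Or.inl (by norm_num))
    have := c3.tendsto.mono_left (nhdsWithin_le_nhds (s := Ioo (0:ℝ) 1))
    simpa using this
  have hhi : Tendsto (fun t : ℝ => (1-t) ^ (-(1:ℝ)/2)) (nhdsWithin 0 (Ioo (0:ℝ) 1)) (nhds 1) := by
    have c3 : ContinuousAt (fun y : ℝ => (1 - y) ^ (-(1:ℝ)/2)) 0 :=
      ((continuousAt_const.sub continuousAt_id)).rpow_const (Or.inl (by norm_num))
    have := c3.tendsto.mono_left (nhdsWithin_le_nhds (s := Ioo (0:ℝ) 1))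
    simpa using this
  refine tendsto_of_tendsto_of_tendsto_of_le_of_le' hlo hhi ?_ ?_
  · filter_upwards [self_mem_nhdsWithin] with t ht
    have h2 : (0:ℝ) < 2 * t ^ ((1:ℝ)/2) := by
      have := rpow_pos_of_pos ht.1 ((1:ℝ)/2); positivity
    rw [le_div_iff₀ h2]
    have := psi_lower ht
    linarith
  · filter_upwards [self_mem_nhdsWithin] with t ht
    have h2 : (0:ℝ) < 2 * t ^ ((1:ℝ)/2) := by
      have := rpow_pos_of_pos ht.1 ((1:ℝ)/2); positivity
    rw [div_le_iff₀ h2]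
    have := psi_upper ht
    linarith

lemma ratio_general (E C L : ℝ) (hC : C ≠ 0) (f : ℝ → ℝ)
    (hf : Tendsto (fun t => t ^ (-(E/2)) * f t) (nhdsWithin 0 (Ioo (0:ℝ) 1)) (nhds L))
    (hval : L * 2 ^ (-E) / C = 1) :
    Tendsto (fun t => f t / (C * (psi t) ^ E)) (nhdsWithin 0 (Ioo (0:ℝ) 1)) (nhds 1) := by
  have hRE : Tendsto (fun t : ℝ => (psi t / (2*t^((1:ℝ)/2))) ^ (-E))
      (nhdsWithin 0 (Ioo (0:ℝ) 1)) (nhds 1) := by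
    have := tendsto_psi_ratio.rpow_const (p := -E) (Or.inl one_ne_zero)
    rwa [one_rpow] at this
  have Hlim := (hf.mul hRE).mul_const ((2:ℝ) ^ (-E) / C)
  rw [show L * 1 * (2 ^ (-E) / C) = L * 2 ^ (-E) / C by ring, hval] at Hlim
  refine Hlim.congr' ?_
  filter_upwards [self_mem_nhdsWithin] with t ht
  obtain ⟨h0, h1⟩ := ht
  have hupos : (0:ℝ) < t ^ ((1:ℝ)/2) := rpow_pos_of_pos h0 _
  have hψ : 0 < psi t := psi_pos ⟨h0, h1⟩
  have hR0 : 0 < psi t / (2 * t ^ ((1:ℝ)/2)) := by positivity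
  have e1 : (psi t) ^ E = (psi t / (2 * t ^ ((1:ℝ)/2))) ^ E * 2 ^ E * t ^ (E/2) := by
    have e2 : t ^ (E/2) = (t ^ ((1:ℝ)/2)) ^ E := by
      rw [← Real.rpow_mul h0.le, show (1:ℝ)/2 * E = E/2 by ring]
    rw [e2, mul_assoc, ← Real.mul_rpow (by norm_num) hupos.le,
      ← Real.mul_rpow hR0.le (by positivity),
      div_mul_cancel₀ _ (by positivity : (2:ℝ) * t ^ ((1:ℝ)/2) ≠ 0)]
  rw [e1]
  have n1 : (psi t / (2 * t ^ ((1:ℝ)/2))) ^ E ≠ 0 := (rpow_pos_of_pos hR0 E).ne'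
  have n2 : (2:ℝ) ^ E ≠ 0 := (rpow_pos_of_pos two_pos E).ne'
  have n3 : t ^ (E/2) ≠ 0 := (rpow_pos_of_pos h0 _).ne'
  rw [Real.rpow_neg h0.le, Real.rpow_neg hR0.le, Real.rpow_neg (by norm_num : (0:ℝ) ≤ 2)]
  field_simp







noncomputable def aex (ε : ℝ) : ℝ := -(1/(2*ε)) - 1/4
noncomputable def bex (ε : ℝ) : ℝ := 1/(2*ε) - 1/4
noncomputable def c1f (ε t : ℝ) : ℝ := dmonoB (1/4) (aex ε) (bex ε) t
noncomputable def c2f (ε t : ℝ) : ℝ :=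
  (1/4) * dmonoB (1/4-1/2) (aex ε+1/2) (bex ε+1/2) t
    - aex ε * dmonoB (1/4+1/2) (aex ε-1/2) (bex ε+1/2) t
    + bex ε * dmonoB (1/4+1/2) (aex ε+1/2) (bex ε-1/2) t

lemma wwpp_eq {ε t : ℝ} (ht : t ∈ Ioo (0:ℝ) 1) :
    ww ε t * pp ε t = mono (-1) (1+2/ε) (1-2/ε) t := by
  obtain ⟨h0, h1⟩ := ht
  have e2 : (1-t) ^ ((1:ℝ)+2/ε) = (1-t) ^ ((1:ℝ)/ε) * (1-t) ^ ((1:ℝ)+1/ε) := by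
    rw [← rpow_add (by linarith : (0:ℝ) < 1 - t)]
    congr 1
    ring
  have e3 : (1+t) ^ ((1:ℝ)-2/ε) = (1+t) ^ (-(1:ℝ)/ε) * (1+t) ^ ((1:ℝ)-1/ε) := by
    rw [← rpow_add (by linarith : (0:ℝ) < 1 + t)]
    congr 1
    ring
  unfold ww pp mono
  rw [show t⁻¹ = t ^ (-1:ℝ) from (Real.rpow_neg_one t).symm, e2, e3]
  ring

lemma cfun_kfun {ε : ℝ} (φ : ℝ → ℝ) {s : ℝ} (hts : φ s ∈ Ioo (0:ℝ) 1) :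
    cfun ε φ s = mono (1/4) (aex ε) (bex ε) (φ s) := by
  unfold cfun
  rw [wwpp_eq hts, mono_rpow hts,
    show (-1:ℝ) * (-(1:ℝ)/4) = 1/4 by norm_num,
    show ((1:ℝ)+2/ε) * (-(1:ℝ)/4) = aex ε by unfold aex; ring,
    show ((1:ℝ)-2/ε) * (-(1:ℝ)/4) = bex ε by unfold bex; ring]

lemma rpow_two_real : ((2:ℝ)) ^ ((2:ℝ)) = 4 := by
  rw [show (2:ℝ) = ((2:ℕ):ℝ) by norm_num, Real.rpow_natCast]
  norm_num

lemma rpow_four_real : ((2:ℝ)) ^ ((4:ℝ)) = 16 := by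
  rw [show (4:ℝ) = ((4:ℕ):ℝ) by norm_num, Real.rpow_natCast]
  norm_num

lemma T0 (ε : ℝ) :
    Tendsto (fun t => mono (1/4) (aex ε) (bex ε) t / ((2:ℝ) ^ (-(1:ℝ)/2) * (psi t) ^ ((1:ℝ)/2)))
      (nhdsWithin 0 (Ioo (0:ℝ) 1)) (nhds 1) := by
  refine ratio_general ((1:ℝ)/2) _ 1 (rpow_pos_of_pos two_pos _).ne' _
    (tendsto_rpow_mono_zero (1/4) (aex ε) (bex ε) (-((1:ℝ)/2/2)) (by norm_num)) ?_
  rw [one_mul, show -((1:ℝ)/2) = -(1:ℝ)/2 by norm_num,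
    div_self (rpow_pos_of_pos two_pos (-(1:ℝ)/2)).ne']

lemma T1 (ε : ℝ) :
    Tendsto (fun t => c1f ε t / ((2:ℝ) ^ (-(3:ℝ)/2) * (psi t) ^ (-(1:ℝ)/2)))
      (nhdsWithin 0 (Ioo (0:ℝ) 1)) (nhds 1) := by
  refine ratio_general (-(1:ℝ)/2) _ (1/4) (rpow_pos_of_pos two_pos _).ne' _
    (tendsto_rpow_dmonoB (1/4) (aex ε) (bex ε) (-(-(1:ℝ)/2/2)) (by norm_num)) ?_
  have h4 : (2:ℝ) ^ (-(-(1:ℝ)/2)) / 2 ^ (-(3:ℝ)/2) = 4 := by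
    rw [← Real.rpow_sub two_pos, show (-(-(1:ℝ)/2) - (-(3:ℝ)/2)) = (2:ℝ) by norm_num,
      rpow_two_real]
  rw [mul_div_assoc, h4]
  norm_num

lemma hc2lim (ε : ℝ) :
    Tendsto (fun t => t ^ (-(-(3:ℝ)/2/2)) * c2f ε t) (nhdsWithin 0 (Ioo (0:ℝ) 1))
      (nhds (-(1/16))) := by
  have h1 := tendsto_rpow_dmonoB (1/4-1/2) (aex ε+1/2) (bex ε+1/2) (-(-(3:ℝ)/2/2)) (by norm_num)
  have h2 := tendsto_rpow_dmonoB_pos (1/4+1/2) (aex ε-1/2) (bex ε+1/2) (-(-(3:ℝ)/2/2)) (by norm_num)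
  have h3 := tendsto_rpow_dmonoB_pos (1/4+1/2) (aex ε+1/2) (bex ε-1/2) (-(-(3:ℝ)/2/2)) (by norm_num)
  have H := ((h1.const_mul (1/4 : ℝ)).sub (h2.const_mul (aex ε))).add (h3.const_mul (bex ε))
  rw [show (1/4 : ℝ) * (1/4-1/2) - aex ε * 0 + bex ε * 0 = -(1/16) by ring] at H
  exact H.congr (fun t => by unfold c2f; ring)

lemma T2 (ε : ℝ) :
    Tendsto (fun t => c2f ε t / (-(2:ℝ) ^ (-(5:ℝ)/2) * (psi t) ^ (-(3:ℝ)/2)))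
      (nhdsWithin 0 (Ioo (0:ℝ) 1)) (nhds 1) := by
  refine ratio_general (-(3:ℝ)/2) _ (-(1/16)) (neg_ne_zero.2 (rpow_pos_of_pos two_pos _).ne') _
    (hc2lim ε) ?_
  have h4 : (2:ℝ) ^ (-(-(3:ℝ)/2)) / 2 ^ (-(5:ℝ)/2) = 16 := by
    rw [← Real.rpow_sub two_pos, show (-(-(3:ℝ)/2) - (-(5:ℝ)/2)) = (4:ℝ) by norm_num,
      rpow_four_real]
  rw [div_neg, mul_div_assoc, h4]
  norm_num


/-- As s → 0+: c(s) ∼ 2^{-1/2} s^{1/2}, c'(s) ∼ 2^{-3/2} s^{-1/2},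
c''(s) ∼ −2^{-5/2} s^{-3/2}. -/
theorem cfun_asymptotics_zero (ε : ℝ) (hε : ε ∈ Ioo (0:ℝ) 2) (φ : ℝ → ℝ)
    (hmaps : MapsTo φ (Icc 0 (psi 1)) (Icc (0:ℝ) 1))
    (hleft : ∀ t ∈ Icc (0:ℝ) 1, φ (psi t) = t)
    (hright : ∀ s ∈ Icc 0 (psi 1), psi (φ s) = s) :
    Tendsto (fun s => cfun ε φ s / ((2:ℝ) ^ (-(1:ℝ)/2) * s ^ ((1:ℝ)/2)))
        (nhdsWithin 0 (Ioo 0 (psi 1))) (nhds 1) ∧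
      Tendsto (fun s => deriv (cfun ε φ) s / ((2:ℝ) ^ (-(3:ℝ)/2) * s ^ (-(1:ℝ)/2)))
        (nhdsWithin 0 (Ioo 0 (psi 1))) (nhds 1) ∧
      Tendsto (fun s => deriv (deriv (cfun ε φ)) s /
          (-(2:ℝ) ^ (-(5:ℝ)/2) * s ^ (-(3:ℝ)/2)))
        (nhdsWithin 0 (Ioo 0 (psi 1))) (nhds 1) := by
  have hφmem : ∀ s ∈ Ioo 0 (psi 1), φ s ∈ Ioo (0:ℝ) 1 := by
    intro s hs
    have hsIcc : s ∈ Icc 0 (psi 1) := ⟨hs.1.le, hs.2.le⟩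
    have h01 := hmaps hsIcc
    have hps := hright s hsIcc
    constructor
    · rcases eq_or_lt_of_le h01.1 with h | h
      · exfalso
        rw [← h, psi_zero] at hps
        exact hs.1.ne hps
      · exact h
    · rcases eq_or_lt_of_le h01.2 with h | h
      · exfalso
        rw [h] at hps
        exact hs.2.ne hps.symm
      · exact h
  have hIooNhds : ∀ s ∈ Ioo 0 (psi 1), Ioo 0 (psi 1) ∈ nhds s :=
    fun s hs => Ioo_mem_nhds hs.1 hs.2
  have hφtendsto : Tendsto φ (nhdsWithin 0 (Ioo 0 (psi 1))) (nhdsWithin 0 (Ioo (0:ℝ) 1)) := by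
    rw [tendsto_nhdsWithin_iff]
    constructor
    · refine tendsto_order.2 ⟨?_, ?_⟩
      · intro a ha
        filter_upwards [self_mem_nhdsWithin] with s hs
        exact lt_trans ha (hφmem s hs).1
      · intro b hb
        set δ : ℝ := min b (1/2) with hδ
        have hδ0 : 0 < δ := lt_min hb (by norm_num)
        have hδ1 : δ < 1 := lt_of_le_of_lt (min_le_right _ _) (by norm_num)
        have hψδ : 0 < psi δ := psi_pos ⟨hδ0, hδ1⟩
        filter_upwards [self_mem_nhdsWithin,
          (gt_mem_nhds hψδ).filter_mono nhdsWithin_le_nhds] with s hs hlt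
        by_contra hcon
        push_neg at hcon
        have hδφ : δ ≤ φ s := le_trans (min_le_left _ _) hcon
        have := psi_mono hδ0.le hδφ (hφmem s hs).2
        rw [hright s ⟨hs.1.le, hs.2.le⟩] at this
        linarith
    · filter_upwards [self_mem_nhdsWithin] with s hs
      exact hφmem s hs
  have hφcont : ∀ s ∈ Ioo 0 (psi 1), ContinuousAt φ s := by
    intro s hs
    have ht := hφmem s hs
    have hst : psi (φ s) = s := hright s ⟨hs.1.le, hs.2.le⟩
    rw [ContinuousAt]
    refine tendsto_order.2 ⟨?_, ?_⟩
    · intro a ha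
      set a₂ : ℝ := max a (φ s / 2) with ha₂
      have ha₂0 : 0 < a₂ := lt_of_lt_of_le (half_pos ht.1) (le_max_right _ _)
      have ha₂t : a₂ < φ s := max_lt ha (by linarith [ht.1])
      have hψa₂ : psi a₂ < s := by
        have := psi_strict ha₂0.le ha₂t ht.2
        rwa [hst] at this
      filter_upwards [Ioo_mem_nhds hψa₂ hs.2, hIooNhds s hs] with u hu1 hu2
      have htu := hφmem u hu2
      have hpu : psi (φ u) = u := hright u ⟨hu2.1.le, hu2.2.le⟩
      by_contra hcon
      push_neg at hcon
      have h2 : φ u ≤ a₂ := le_trans hcon (le_max_left _ _)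
      have := psi_mono htu.1.le h2 (lt_trans ha₂t ht.2)
      rw [hpu] at this
      linarith [hu1.1]
    · intro b hb
      set b₂ : ℝ := min b ((φ s + 1)/2) with hb₂
      have hb₂t : φ s < b₂ := lt_min hb (by linarith [ht.2])
      have hb₂1 : b₂ < 1 := lt_of_le_of_lt (min_le_right _ _) (by linarith [ht.2])
      have hψb₂ : s < psi b₂ := by
        have := psi_strict ht.1.le hb₂t hb₂1
        rwa [hst] at this
      filter_upwards [Iio_mem_nhds hψb₂, hIooNhds s hs] with u hu1 hu2
      have htu := hφmem u hu2
      have hpu : psi (φ u) = u := hright u ⟨hu2.1.le, hu2.2.le⟩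
      by_contra hcon
      push_neg at hcon
      have h2 : b₂ ≤ φ u := le_trans (min_le_left _ _) hcon
      have := psi_mono (by linarith [ht.1] : (0:ℝ) ≤ b₂) h2 htu.2
      rw [hpu] at this
      linarith [mem_Iio.1 hu1]
  have hφderiv : ∀ s ∈ Ioo 0 (psi 1), HasDerivAt φ (betaIntegrand (φ s))⁻¹ s := by
    intro s hs
    have ht := hφmem s hs
    refine HasDerivAt.of_local_left_inverse (hφcont s hs) (hasDerivAt_psi ht)
      (beta_pos ht.1 ht.2).ne' ?_
    filter_upwards [hIooNhds s hs] with u hu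
    exact hright u ⟨hu.1.le, hu.2.le⟩
  have hbeta_inv : ∀ t ∈ Ioo (0:ℝ) 1,
      (betaIntegrand t)⁻¹ = mono (1/2) (1/2) (1/2) t := by
    intro t ht
    have : betaIntegrand t = mono (-(1/2)) (-(1/2)) (-(1/2)) t := betaIntegrand_eq' t
    rw [this, mono_inv ht]
    norm_num
  have hck : ∀ s ∈ Ioo 0 (psi 1), cfun ε φ s = mono (1/4) (aex ε) (bex ε) (φ s) :=
    fun s hs => cfun_kfun φ (hφmem s hs)
  have hcderiv : ∀ s ∈ Ioo 0 (psi 1), HasDerivAt (cfun ε φ) (c1f ε (φ s)) s := by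
    intro s hs
    have ht := hφmem s hs
    have hk := hasDerivAt_mono ht (1/4) (aex ε) (bex ε)
    have hcomp := hk.comp s (hφderiv s hs)
    have heq : cfun ε φ =ᶠ[nhds s] (mono (1/4) (aex ε) (bex ε)) ∘ φ := by
      filter_upwards [hIooNhds s hs] with u hu
      exact hck u hu
    have H := hcomp.congr_of_eventuallyEq heq
    have hval : (1/4 * mono (1/4-1) (aex ε) (bex ε) (φ s)
        - aex ε * mono (1/4) (aex ε - 1) (bex ε) (φ s)
        + bex ε * mono (1/4) (aex ε) (bex ε - 1) (φ s)) * (betaIntegrand (φ s))⁻¹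
        = c1f ε (φ s) := by
      rw [hbeta_inv _ ht]
      unfold c1f
      rw [dmonoB_eq ht]
    rwa [hval] at H
  have hderiv_eq : ∀ s ∈ Ioo 0 (psi 1), deriv (cfun ε φ) s = c1f ε (φ s) :=
    fun s hs => (hcderiv s hs).deriv
  have hc2deriv : ∀ s ∈ Ioo 0 (psi 1),
      HasDerivAt (deriv (cfun ε φ)) (c2f ε (φ s)) s := by
    intro s hs
    have ht := hφmem s hs
    have hD1 := hasDerivAt_mono ht (1/4-1/2) (aex ε+1/2) (bex ε+1/2)
    have hD2 := hasDerivAt_mono ht (1/4+1/2) (aex ε-1/2) (bex ε+1/2)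
    have hD3 := hasDerivAt_mono ht (1/4+1/2) (aex ε+1/2) (bex ε-1/2)
    have h1 : HasDerivAt (fun t => c1f ε t)
        ((1/4) * ((1/4-1/2) * mono (1/4-1/2-1) (aex ε+1/2) (bex ε+1/2) (φ s)
          - (aex ε+1/2) * mono (1/4-1/2) (aex ε+1/2-1) (bex ε+1/2) (φ s)
          + (bex ε+1/2) * mono (1/4-1/2) (aex ε+1/2) (bex ε+1/2-1) (φ s))
        - ((aex ε) * ((1/4+1/2) * mono (1/4+1/2-1) (aex ε-1/2) (bex ε+1/2) (φ s)
          - (aex ε-1/2) * mono (1/4+1/2) (aex ε-1/2-1) (bex ε+1/2) (φ s)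
          + (bex ε+1/2) * mono (1/4+1/2) (aex ε-1/2) (bex ε+1/2-1) (φ s)))
        + ((bex ε) * ((1/4+1/2) * mono (1/4+1/2-1) (aex ε+1/2) (bex ε-1/2) (φ s)
          - (aex ε+1/2) * mono (1/4+1/2) (aex ε+1/2-1) (bex ε-1/2) (φ s)
          + (bex ε-1/2) * mono (1/4+1/2) (aex ε+1/2) (bex ε-1/2-1) (φ s)))) (φ s) := by
      have Hsum := ((hD1.const_mul (1/4:ℝ)).sub (hD2.const_mul (aex ε))).add
        (hD3.const_mul (bex ε))
      have : (fun t => (1/4:ℝ) * mono (1/4-1/2) (aex ε+1/2) (bex ε+1/2) t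
          - aex ε * mono (1/4+1/2) (aex ε-1/2) (bex ε+1/2) t
          + bex ε * mono (1/4+1/2) (aex ε+1/2) (bex ε-1/2) t) = fun t => c1f ε t := by
        funext t
        unfold c1f dmonoB
        norm_num
      rw [← this]
      exact Hsum
    have hcomp := h1.comp s (hφderiv s hs)
    have heq : deriv (cfun ε φ) =ᶠ[nhds s] (fun t => c1f ε t) ∘ φ := by
      filter_upwards [hIooNhds s hs] with u hu
      exact hderiv_eq u hu
    have H := hcomp.congr_of_eventuallyEq heq
    have hval : (((1/4) * ((1/4-1/2) * mono (1/4-1/2-1) (aex ε+1/2) (bex ε+1/2) (φ s)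
          - (aex ε+1/2) * mono (1/4-1/2) (aex ε+1/2-1) (bex ε+1/2) (φ s)
          + (bex ε+1/2) * mono (1/4-1/2) (aex ε+1/2) (bex ε+1/2-1) (φ s))
        - ((aex ε) * ((1/4+1/2) * mono (1/4+1/2-1) (aex ε-1/2) (bex ε+1/2) (φ s)
          - (aex ε-1/2) * mono (1/4+1/2) (aex ε-1/2-1) (bex ε+1/2) (φ s)
          + (bex ε+1/2) * mono (1/4+1/2) (aex ε-1/2) (bex ε+1/2-1) (φ s)))
        + ((bex ε) * ((1/4+1/2) * mono (1/4+1/2-1) (aex ε+1/2) (bex ε-1/2) (φ s)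
          - (aex ε+1/2) * mono (1/4+1/2) (aex ε+1/2-1) (bex ε-1/2) (φ s)
          + (bex ε-1/2) * mono (1/4+1/2) (aex ε+1/2) (bex ε-1/2-1) (φ s)))) * (betaIntegrand (φ s))⁻¹) = c2f ε (φ s) := by
      rw [hbeta_inv _ ht]
      unfold c2f
      rw [dmonoB_eq ht, dmonoB_eq ht, dmonoB_eq ht]
      ring
    rwa [hval] at H
  have hderiv2_eq : ∀ s ∈ Ioo 0 (psi 1),
      deriv (deriv (cfun ε φ)) s = c2f ε (φ s) :=
    fun s hs => (hc2deriv s hs).deriv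
  refine ⟨?_, ?_, ?_⟩
  · refine ((T0 ε).comp hφtendsto).congr' ?_
    filter_upwards [self_mem_nhdsWithin] with s hs
    simp only [Function.comp_apply]
    rw [hright s ⟨hs.1.le, hs.2.le⟩, hck s hs]
  · refine ((T1 ε).comp hφtendsto).congr' ?_
    filter_upwards [self_mem_nhdsWithin] with s hs
    simp only [Function.comp_apply]
    rw [hright s ⟨hs.1.le, hs.2.le⟩, hderiv_eq s hs]
  · refine ((T2 ε).comp hφtendsto).congr' ?_
    filter_upwards [self_mem_nhdsWithin] with s hs
    simp only [Function.comp_apply]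
    rw [hright s ⟨hs.1.le, hs.2.le⟩, hderiv2_eq s hs]
end
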